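/- Reduction to the relevant variables for recursive and unique-solution models: a formula φ ∈ L⁺(S) is satisfiable in T_rec(S) if and only if it is satisfiable in T_rec(S_φ), and φ is satisfiable in T_uniq(S) if and only if it is satisfiable in T_uniq(S_φ). -/

import Mathlib

/-- A signature `S = (U, V, R)`: finite (disjoint) sets of exogenous variables `U` and
endogenous variables `V`, together with a nonempty finite set (here: type) of possible
values for each variable. -/
structure Signature where
  U : Type
  V : Type
  uFin : Fintype U
  vFin : Fintype V
  vDecEq : DecidableEq V
  valU : U → Type
  valV : V → Type
  valUFin : ∀ u, Fintype (valU u)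
  valVFin : ∀ X, Fintype (valV X)
  valUNonempty : ∀ u, Nonempty (valU u)
  valVNonempty : ∀ X, Nonempty (valV X)

attribute [instance] Signature.uFin Signature.vFin Signature.vDecEq
  Signature.valUFin Signature.valVFin Signature.valUNonempty Signature.valVNonempty

/-- The standing assumption `|R(Y)| ≥ 2` for every variable `Y`. -/
def Signature.Standard (S : Signature) : Prop :=
  (∀ u, 2 ≤ Fintype.card (S.valU u)) ∧ (∀ X, 2 ≤ Fintype.card (S.valV X))

/-- A setting `u⃗` of values for all the exogenous variables. -/
abbrev Signature.Context (S : Signature) : Type := ∀ u : S.U, S.valU u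

/-- An assignment of values to all the endogenous variables. -/
abbrev Signature.Assignment (S : Signature) : Type := ∀ X : S.V, S.valV X

/-- An intervention `X⃗ ← x⃗`: a vector of distinct endogenous variables together with
values for them, encoded as a partial assignment. -/
abbrev Signature.Intervention (S : Signature) : Type := ∀ X : S.V, Option (S.valV X)

/-- The empty intervention (`[true]`). -/
def Signature.emptyInt (S : Signature) : S.Intervention := fun _ => none

/-- Extend an intervention by additionally setting `W` to `w`. -/
def intUpdate {S : Signature} (g : S.Intervention) (W : S.V) (w : S.valV W) :
    S.Intervention :=
  fun X => if h : X = W then some (cast (congrArg S.valV h).symm w) else g X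

/-- A causal model `T = (S, F)` over the signature `S`. -/
structure CausalModel (S : Signature) where
  F : ∀ X : S.V, S.Context → (∀ Y : S.V, Y ≠ X → S.valV Y) → S.valV X

/-- `v` is a solution of `T_{X⃗ ← x⃗}(u⃗)` (intervention encoded by `g`): intervened
variables take their set values, and every other variable satisfies its equation. -/
def CausalModel.IsSolution {S : Signature} (T : CausalModel S) (g : S.Intervention)
    (u : S.Context) (v : S.Assignment) : Prop :=
  ∀ X : S.V,
    (∀ x, g X = some x → v X = x) ∧
    (g X = none → v X = T.F X u fun Y _ => v Y)

/-- `T ∈ T_uniq(S)`: the equations of `T_{X⃗ ← x⃗}(u⃗)` have a unique solution, for every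
intervention and every context. -/
def CausalModel.UniqueSolutions {S : Signature} (T : CausalModel S) : Prop :=
  ∀ (g : S.Intervention) (u : S.Context), ∃! v : S.Assignment, T.IsSolution g u v

/-- `T ∈ T_rec(S)`: there is a (strict) total order `≺` on `V` such that `F_X` is
independent of the value of `Y` whenever `X ≺ Y`. -/
def CausalModel.Recursive {S : Signature} (T : CausalModel S) : Prop :=
  ∃ r : S.V → S.V → Prop, IsStrictTotalOrder S.V r ∧
    ∀ (X : S.V) (u : S.Context) (w w' : ∀ Y : S.V, Y ≠ X → S.valV Y),
      (∀ (Y : S.V) (h : Y ≠ X), ¬ r X Y → w Y h = w' Y h) →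
      T.F X u w = T.F X u w'

/-- Boolean combinations of atoms of the form `X(u⃗) = x`. -/
inductive IForm (S : Signature) : Type where
  | atom : (X : S.V) → S.Context → S.valV X → IForm S
  | not : IForm S → IForm S
  | and : IForm S → IForm S → IForm S
  | or : IForm S → IForm S → IForm S

namespace IForm

variable {S : Signature}

/-- The settings `u⃗` of the exogenous variables mentioned in a formula. -/
def mentions : IForm S → Set S.Context
  | atom _ u _ => {u}
  | not φ => φ.mentions
  | and φ ψ => φ.mentions ∪ ψ.mentions
  | or φ ψ => φ.mentions ∪ ψ.mentions

/-- The endogenous variables appearing in a formula. -/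
def vars : IForm S → Set S.V
  | atom X _ _ => {X}
  | not φ => φ.vars
  | and φ ψ => φ.vars ∪ ψ.vars
  | or φ ψ => φ.vars ∪ ψ.vars

/-- Evaluate a Boolean combination of atoms, where the atoms mentioning `u⃗` are
evaluated in the assignment `σ u⃗`. -/
def eval (σ : S.Context → S.Assignment) : IForm S → Prop
  | atom X u x => σ u X = x
  | not φ => ¬ φ.eval σ
  | and φ ψ => φ.eval σ ∧ ψ.eval σ
  | or φ ψ => φ.eval σ ∨ ψ.eval σ

def imp (φ ψ : IForm S) : IForm S := or (not φ) ψ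

/-- `φ ∧ ψ₁ ∧ … ∧ ψₙ`. -/
def conj (φ : IForm S) : List (IForm S) → IForm S
  | [] => φ
  | ψ :: l => and φ (conj ψ l)

/-- `φ ∨ ψ₁ ∨ … ∨ ψₙ`. -/
def disj (φ : IForm S) : List (IForm S) → IForm S
  | [] => φ
  | ψ :: l => or φ (disj ψ l)

/-- Evaluation under an arbitrary truth assignment to the atoms. -/
def pEval (val : ∀ X : S.V, S.Context → S.valV X → Prop) : IForm S → Prop
  | atom X u x => val X u x
  | not φ => ¬ φ.pEval val
  | and φ ψ => φ.pEval val ∧ ψ.pEval val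
  | or φ ψ => φ.pEval val ∨ ψ.pEval val

/-- An instance of a propositional tautology. -/
def Tautology (φ : IForm S) : Prop := ∀ val, φ.pEval val

theorem mentions_nonempty : ∀ φ : IForm S, φ.mentions.Nonempty
  | atom _ u _ => ⟨u, rfl⟩
  | not φ => mentions_nonempty φ
  | and φ _ => (mentions_nonempty φ).imp fun _ h => Set.mem_union_left _ h
  | or φ _ => (mentions_nonempty φ).imp fun _ h => Set.mem_union_left _ h

end IForm

/-- `T ⊨ [X⃗ ← x⃗] φ` : for every choice, for each mentioned setting `u⃗`, of a solution
of `T_{X⃗ ← x⃗}(u⃗)`, the formula `φ` evaluates to true. -/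
def CausalModel.boxSat {S : Signature} (T : CausalModel S) (g : S.Intervention)
    (φ : IForm S) : Prop :=
  ∀ σ : S.Context → S.Assignment,
    (∀ u ∈ φ.mentions, T.IsSolution g u (σ u)) → φ.eval σ

/-- The language `L⁺(S)`: Boolean combinations of basic causal formulas `[Y⃗ ← y⃗] φ`. -/
inductive LPlus (S : Signature) : Type where
  | box : S.Intervention → IForm S → LPlus S
  | not : LPlus S → LPlus S
  | and : LPlus S → LPlus S → LPlus S
  | or : LPlus S → LPlus S → LPlus S

namespace LPlus

variable {S : Signature}

/-- Truth of a causal formula in a causal model. -/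
def sat : LPlus S → CausalModel S → Prop
  | box g φ, T => T.boxSat g φ
  | not φ, T => ¬ φ.sat T
  | and φ ψ, T => φ.sat T ∧ ψ.sat T
  | or φ ψ, T => φ.sat T ∨ ψ.sat T

/-- `⟨X⃗ ← x⃗⟩ φ` abbreviates `¬ [X⃗ ← x⃗] ¬ φ`. -/
def dia (g : S.Intervention) (φ : IForm S) : LPlus S := not (box g (IForm.not φ))

def imp (φ ψ : LPlus S) : LPlus S := or (not φ) ψ

def iff (φ ψ : LPlus S) : LPlus S := and (imp φ ψ) (imp ψ φ)

def conj (φ : LPlus S) : List (LPlus S) → LPlus S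
  | [] => φ
  | ψ :: l => and φ (conj ψ l)

def disj (φ : LPlus S) : List (LPlus S) → LPlus S
  | [] => φ
  | ψ :: l => or φ (disj ψ l)

/-- Membership in the sublanguage `L_uniq(S)`: Boolean combinations of formulas of the
form `[Y⃗ ← y⃗](X(u⃗) = x)`. -/
def InLuniq : LPlus S → Prop
  | box _ φ => ∃ (X : S.V) (u : S.Context) (x : S.valV X), φ = IForm.atom X u x
  | not φ => φ.InLuniq
  | and φ ψ => φ.InLuniq ∧ ψ.InLuniq
  | or φ ψ => φ.InLuniq ∧ ψ.InLuniq

/-- Evaluation under an arbitrary truth assignment to the basic causal formulas. -/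
def pEval (val : S.Intervention → IForm S → Prop) : LPlus S → Prop
  | box g φ => val g φ
  | not φ => ¬ φ.pEval val
  | and φ ψ => φ.pEval val ∧ ψ.pEval val
  | or φ ψ => φ.pEval val ∨ ψ.pEval val

/-- An instance of a propositional tautology. -/
def Tautology (φ : LPlus S) : Prop := ∀ val, φ.pEval val

/-- The endogenous variables appearing in a causal formula (including the variables
set by its interventions). -/
def vars : LPlus S → Set S.V
  | box g φ => {X | g X ≠ none} ∪ φ.vars
  | not φ => φ.vars
  | and φ ψ => φ.vars ∪ ψ.vars
  | or φ ψ => φ.vars ∪ ψ.vars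

/-- The settings of the exogenous variables mentioned in a causal formula. -/
def contexts : LPlus S → Set S.Context
  | box _ φ => φ.mentions
  | not φ => φ.contexts
  | and φ ψ => φ.contexts ∪ ψ.contexts
  | or φ ψ => φ.contexts ∪ ψ.contexts

theorem contexts_nonempty : ∀ φ : LPlus S, φ.contexts.Nonempty
  | box _ φ => φ.mentions_nonempty
  | not φ => contexts_nonempty φ
  | and φ _ => (contexts_nonempty φ).imp fun _ h => Set.mem_union_left _ h
  | or φ _ => (contexts_nonempty φ).imp fun _ h => Set.mem_union_left _ h

end LPlus

/-- `Y` affects `Z` in `T`: for some setting of the exogenous variables and of some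
other endogenous variables, changing the value of `Y` changes the value of `Z`. -/
def CausalModel.Affects {S : Signature} (T : CausalModel S) (Y Z : S.V) : Prop :=
  Y ≠ Z ∧ ∃ (g : S.Intervention) (y : S.valV Y) (u : S.Context) (z z' : S.valV Z),
    g Y = none ∧ g Z = none ∧ z ≠ z' ∧
    T.boxSat (intUpdate g Y y) (IForm.atom Z u z') ∧ T.boxSat g (IForm.atom Z u z)

/-- Provability from a set of axioms using modus ponens. -/
inductive Provable {S : Signature} (Ax : Set (LPlus S)) : LPlus S → Prop
  | ax : ∀ {φ}, φ ∈ Ax → Provable Ax φ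
  | mp : ∀ {φ ψ}, Provable Ax (φ.imp ψ) → Provable Ax φ → Provable Ax ψ

/-! ### Reduced signatures -/

/-- The signature with endogenous variables `Vs ⊆ V`, a single fresh exogenous variable
`U*` whose range is the set `C` of settings of the original exogenous variables, and
the original ranges for the variables of `Vs`. -/
noncomputable def restrictedSig (S : Signature) (Vs : Set S.V) (C : Set S.Context)
    (hC : C.Nonempty) : Signature where
  U := PUnit
  V := {X : S.V // X ∈ Vs}
  uFin := inferInstance
  vFin := (Set.toFinite Vs).fintype
  vDecEq := inferInstance
  valU := fun _ => {u : S.Context // u ∈ C}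
  valV := fun X => S.valV X.1
  valUFin := fun _ => (Set.toFinite C).fintype
  valVFin := fun X => S.valVFin X.1
  valUNonempty := fun _ => hC.to_subtype
  valVNonempty := fun X => S.valVNonempty X.1

/-- The reduced signature `S_φ = ({U*}, V_φ, R_φ)`. -/
noncomputable def reducedSig (S : Signature) (φ : LPlus S) : Signature :=
  restrictedSig S φ.vars φ.contexts φ.contexts_nonempty

/-- Read an inner formula (whose variables and settings all appear in `φ₀`) as a
formula over the reduced signature `S_{φ₀}`. -/
noncomputable def IForm.restrict {S : Signature} (φ₀ : LPlus S) :
    (ψ : IForm S) → (∀ X ∈ ψ.vars, X ∈ φ₀.vars) → (∀ u ∈ ψ.mentions, u ∈ φ₀.contexts) →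
    IForm (reducedSig S φ₀)
  | .atom X u x, h, h2 => .atom ⟨X, h X rfl⟩ (fun _ => ⟨u, h2 u rfl⟩) x
  | .not ψ, h, h2 => .not (ψ.restrict φ₀ h h2)
  | .and ψ χ, h, h2 =>
      .and (ψ.restrict φ₀ (fun X hX => h X (Set.mem_union_left _ hX))
              (fun u hu => h2 u (Set.mem_union_left _ hu)))
           (χ.restrict φ₀ (fun X hX => h X (Set.mem_union_right _ hX))
              (fun u hu => h2 u (Set.mem_union_right _ hu)))
  | .or ψ χ, h, h2 =>
      .or (ψ.restrict φ₀ (fun X hX => h X (Set.mem_union_left _ hX))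
             (fun u hu => h2 u (Set.mem_union_left _ hu)))
          (χ.restrict φ₀ (fun X hX => h X (Set.mem_union_right _ hX))
             (fun u hu => h2 u (Set.mem_union_right _ hu)))

/-- Read a causal formula (whose variables and settings all appear in `φ₀`) as a
formula over the reduced signature `S_{φ₀}`. -/
noncomputable def LPlus.restrict {S : Signature} (φ₀ : LPlus S) :
    (ψ : LPlus S) → (∀ X ∈ ψ.vars, X ∈ φ₀.vars) → (∀ u ∈ ψ.contexts, u ∈ φ₀.contexts) →
    LPlus (reducedSig S φ₀)
  | .box g χ, h, h2 =>
      .box (fun X' => g X'.1)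
        (χ.restrict φ₀ (fun X hX => h X (Set.mem_union_right _ hX)) h2)
  | .not ψ, h, h2 => .not (LPlus.restrict φ₀ ψ h h2)
  | .and ψ χ, h, h2 =>
      .and (LPlus.restrict φ₀ ψ (fun X hX => h X (Set.mem_union_left _ hX))
              (fun u hu => h2 u (Set.mem_union_left _ hu)))
           (LPlus.restrict φ₀ χ (fun X hX => h X (Set.mem_union_right _ hX))
              (fun u hu => h2 u (Set.mem_union_right _ hu)))
  | .or ψ χ, h, h2 =>
      .or (LPlus.restrict φ₀ ψ (fun X hX => h X (Set.mem_union_left _ hX))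
             (fun u hu => h2 u (Set.mem_union_left _ hu)))
          (LPlus.restrict φ₀ χ (fun X hX => h X (Set.mem_union_right _ hX))
             (fun u hu => h2 u (Set.mem_union_right _ hu)))

/-- `φ` read as a formula of `L⁺(S_φ)`. -/
noncomputable def LPlus.reduced {S : Signature} (φ : LPlus S) : LPlus (reducedSig S φ) :=
  LPlus.restrict φ φ (fun _ h => h) (fun _ h => h)


/-! ### Auxiliary machinery -/

section Aux

attribute [local instance] Classical.propDecidable

variable {S : Signature}

/-- Solutions agree below `X` if the interventions agree below `X`, in a recursive model. -/
theorem sol_agree {T : CausalModel S} {r : S.V → S.V → Prop}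
    (hr : IsStrictTotalOrder S.V r)
    (hind : ∀ (X : S.V) (u : S.Context) (w w' : ∀ Y : S.V, Y ≠ X → S.valV Y),
      (∀ (Y : S.V) (h : Y ≠ X), ¬ r X Y → w Y h = w' Y h) → T.F X u w = T.F X u w')
    {g1 g2 : S.Intervention} {u : S.Context} {v1 v2 : S.Assignment}
    (h1 : T.IsSolution g1 u v1) (h2 : T.IsSolution g2 u v2) (X : S.V)
    (hg : ∀ Z, ¬ r X Z → g1 Z = g2 Z) :
    ∀ Z, ¬ r X Z → v1 Z = v2 Z := by
  haveI := hr
  have wf : WellFounded r := Finite.wellFounded_of_trans_of_irrefl r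
  intro Z
  induction Z using WellFounded.induction wf with
  | _ Z ih =>
    intro hXZ
    cases hgZ : g1 Z with
    | some x =>
      rw [(h1 Z).1 x hgZ, (h2 Z).1 x ((hg Z hXZ) ▸ hgZ)]
    | none =>
      rw [(h1 Z).2 hgZ, (h2 Z).2 ((hg Z hXZ) ▸ hgZ)]
      refine hind Z u _ _ fun W hW hZW => ?_
      rcases trichotomous_of r W Z with h | h | h
      · exact ih W h (fun hXW => hXZ (_root_.trans hXW h))
      · exact absurd h hW
      · exact absurd h hZW

/-- A recursive model has unique solutions. -/
theorem CausalModel.Recursive.uniqueSolutions {T : CausalModel S}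
    (hrec : T.Recursive) : T.UniqueSolutions := by
  obtain ⟨r, hr, hind⟩ := hrec
  haveI := hr
  have wf : WellFounded r := Finite.wellFounded_of_trans_of_irrefl r
  intro g u
  classical
  let step : ∀ X : S.V, (∀ Y, r Y X → S.valV Y) → S.valV X := fun X ih =>
    (g X).getD (T.F X u fun Y _ => if h : r Y X then ih Y h else
      Classical.arbitrary (S.valV Y))
  let v : S.Assignment := fun X => wf.fix step X
  have hv : ∀ X, v X = step X (fun Y _ => v Y) := fun X => wf.fix_eq step X
  have hsol : T.IsSolution g u v := by
    intro X
    constructor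
    · intro x hx
      rw [hv X]
      simp only [step, hx, Option.getD_some]
    · intro hx
      rw [hv X]
      simp only [step, hx, Option.getD_none]
      refine hind X u _ _ fun Y hY hXY => ?_
      rcases trichotomous_of r Y X with h | h | h
      · rw [dif_pos h]
      · exact absurd h hY
      · exact absurd h hXY
  refine ⟨v, hsol, fun v2 h2 => funext fun X => ?_⟩
  exact sol_agree hr hind h2 hsol X (fun _ _ => rfl) X (irrefl_of r X)


/-- The unique solution of a unique-solutions model. -/
noncomputable def theSol (T : CausalModel S) (hT : T.UniqueSolutions)
    (g : S.Intervention) (u : S.Context) : S.Assignment :=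
  (hT g u).choose

theorem theSol_spec (T : CausalModel S) (hT : T.UniqueSolutions)
    (g : S.Intervention) (u : S.Context) : T.IsSolution g u (theSol T hT g u) :=
  (hT g u).choose_spec.1

theorem theSol_eq (T : CausalModel S) (hT : T.UniqueSolutions)
    {g : S.Intervention} {u : S.Context} {v : S.Assignment}
    (h : T.IsSolution g u v) : v = theSol T hT g u :=
  (hT g u).choose_spec.2 v h

variable (φ : LPlus S)

/-- Extension of an intervention on the reduced signature to the full signature. -/
noncomputable def gext (g' : (reducedSig S φ).Intervention) : S.Intervention :=
  fun Y => if hY : Y ∈ φ.vars then g' ⟨Y, hY⟩ else none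

/-- The model over `S` induced by a model over the reduced signature. -/
noncomputable def extModel (T' : CausalModel (reducedSig S φ)) : CausalModel S where
  F X u w :=
    if hX : X ∈ φ.vars then
      if hu : u ∈ φ.contexts then
        T'.F ⟨X, hX⟩ (fun _ => ⟨u, hu⟩)
          (fun Y' hY' => w Y'.1 (fun e => hY' (Subtype.ext e)))
      else Classical.arbitrary (S.valV X)
    else Classical.arbitrary (S.valV X)

/-- The projection of a unique-solutions model over `S` to the reduced signature. -/
noncomputable def projModel (T : CausalModel S) (hT : T.UniqueSolutions) :
    CausalModel (reducedSig S φ) where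
  F X' u' w' :=
    theSol T hT
      (fun Y => if hY : Y ∈ φ.vars then
          if hne : Y = X'.1 then none
          else some (w' ⟨Y, hY⟩ (fun e => hne (congrArg Subtype.val e)))
        else none)
      (u' PUnit.unit).1 X'.1


theorem gext_restrict (g : S.Intervention) (hsupp : ∀ Y, Y ∉ φ.vars → g Y = none) :
    gext φ (fun X' => g X'.1) = g := by
  funext Y
  by_cases hY : Y ∈ φ.vars
  · simp only [gext, dif_pos hY]
  · simp only [gext, dif_neg hY, hsupp Y hY]

theorem gext_pos (g' : (reducedSig S φ).Intervention) {Y : S.V} (hY : Y ∈ φ.vars) :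
    gext φ g' Y = g' ⟨Y, hY⟩ := dif_pos hY

theorem gext_neg (g' : (reducedSig S φ).Intervention) {Y : S.V} (hY : Y ∉ φ.vars) :
    gext φ g' Y = none := dif_neg hY

theorem projModel_sol_of_sol {T : CausalModel S} (hT : T.UniqueSolutions)
    (g' : (reducedSig S φ).Intervention) {u : S.Context} (hu : u ∈ φ.contexts)
    {v : S.Assignment} (hv : T.IsSolution (gext φ g') u v) :
    (projModel φ T hT).IsSolution g' (fun _ => ⟨u, hu⟩) (fun X' => v X'.1) := by
  intro X'
  constructor
  · intro x hx
    refine (hv X'.1).1 x ?_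
    rw [gext_pos φ g' X'.2]
    exact hx
  · intro hx
    set gg : S.Intervention := (fun Y => if hY : Y ∈ φ.vars then
        if hne : Y = X'.1 then none else some (v Y) else none) with ggdef
    have ggA : ∀ (Y : S.V) (hY : Y ∈ φ.vars), Y ≠ X'.1 → gg Y = some (v Y) :=
      fun Y hY hne => (dif_pos hY).trans (dif_neg hne)
    have ggB : ∀ (Y : S.V), Y ∈ φ.vars → Y = X'.1 → gg Y = none :=
      fun Y hY hne => (dif_pos hY).trans (dif_pos hne)
    have ggC : ∀ (Y : S.V), Y ∉ φ.vars → gg Y = none := fun Y hY => dif_neg hY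
    have hsol : T.IsSolution gg u v := by
      intro Y
      constructor
      · intro y hy
        by_cases hY : Y ∈ φ.vars
        · by_cases hne : Y = X'.1
          · rw [ggB Y hY hne] at hy; exact absurd hy (by simp)
          · rw [ggA Y hY hne] at hy
            exact Option.some_injective _ hy
        · rw [ggC Y hY] at hy; exact absurd hy (by simp)
      · intro hy
        refine (hv Y).2 ?_
        by_cases hY : Y ∈ φ.vars
        · by_cases hne : Y = X'.1
          · rw [hne, gext_pos φ g' X'.2]; exact hx
          · rw [ggA Y hY hne] at hy; exact absurd hy (by simp)
        · exact gext_neg φ g' hY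
    have := theSol_eq T hT hsol
    exact congrFun this X'.1

theorem sol_of_projModel_sol {T : CausalModel S} (hT : T.UniqueSolutions)
    (g' : (reducedSig S φ).Intervention) {u : S.Context} (hu : u ∈ φ.contexts)
    {v' : (reducedSig S φ).Assignment}
    (hv' : (projModel φ T hT).IsSolution g' (fun _ => ⟨u, hu⟩) v') :
    ∀ X' : (reducedSig S φ).V, v' X' = theSol T hT (gext φ g') u X'.1 := by
  set hfull : S.Intervention :=
    (fun Y => if hY : Y ∈ φ.vars then some (v' ⟨Y, hY⟩) else none) with hfulldef
  have hfullP : ∀ (Y : S.V) (hY : Y ∈ φ.vars), hfull Y = some (v' ⟨Y, hY⟩) :=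
    fun Y hY => dif_pos hY
  have hfullN : ∀ (Y : S.V), Y ∉ φ.vars → hfull Y = none := fun Y hY => dif_neg hY
  set w : S.Assignment := theSol T hT hfull u with hwdef
  have hw1 : ∀ (Y : S.V) (hY : Y ∈ φ.vars), w Y = v' ⟨Y, hY⟩ := by
    intro Y hY
    exact (theSol_spec T hT hfull u Y).1 _ (hfullP Y hY)
  have hkey : ∀ X' : (reducedSig S φ).V, g' X' = none →
      w X'.1 = T.F X'.1 u (fun Y _ => w Y) := by
    intro X' hgX
    set hX : S.Intervention := (fun Y => if hY : Y ∈ φ.vars then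
      if hne : Y = X'.1 then none
      else some (v' ⟨Y, hY⟩) else none) with hXdef
    have hXA : ∀ (Y : S.V) (hY : Y ∈ φ.vars), Y ≠ X'.1 → hX Y = some (v' ⟨Y, hY⟩) :=
      fun Y hY hne => (dif_pos hY).trans (dif_neg hne)
    have hXB : hX X'.1 = none := (dif_pos X'.2).trans (dif_pos rfl)
    have hXC : ∀ (Y : S.V), Y ∉ φ.vars → hX Y = none := fun Y hY => dif_neg hY
    have hz : v' X' = theSol T hT hX u X'.1 := (hv' X').2 hgX
    have hzsol : T.IsSolution hfull u (theSol T hT hX u) := by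
      intro Y
      constructor
      · intro y hy
        by_cases hY : Y ∈ φ.vars
        · rw [hfullP Y hY] at hy
          have hy' : y = v' ⟨Y, hY⟩ := (Option.some_injective _ hy).symm
          by_cases hne : Y = X'.1
          · subst hne
            rw [hy']
            exact hz.symm
          · rw [hy']
            exact (theSol_spec T hT hX u Y).1 _ (hXA Y hY hne)
        · rw [hfullN Y hY] at hy; exact absurd hy (by simp)
      · intro hy
        by_cases hY : Y ∈ φ.vars
        · rw [hfullP Y hY] at hy; exact absurd hy (by simp)
        · exact (theSol_spec T hT hX u Y).2 (hXC Y hY)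
    have hzw : theSol T hT hX u = w := theSol_eq T hT hzsol
    calc w X'.1 = theSol T hT hX u X'.1 := (congrFun hzw _).symm
      _ = T.F X'.1 u (fun Y _ => theSol T hT hX u Y) :=
          (theSol_spec T hT hX u X'.1).2 hXB
      _ = T.F X'.1 u (fun Y _ => w Y) := by rw [hzw]
  have hwsol : T.IsSolution (gext φ g') u w := by
    intro Y
    constructor
    · intro y hy
      have hY : Y ∈ φ.vars := by
        by_contra h
        rw [gext_neg φ g' h] at hy
        exact absurd hy (by simp)
      rw [gext_pos φ g' hY] at hy
      rw [hw1 Y hY, (hv' ⟨Y, hY⟩).1 y hy]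
    · intro hy
      by_cases hY : Y ∈ φ.vars
      · rw [gext_pos φ g' hY] at hy
        exact hkey ⟨Y, hY⟩ hy
      · exact (theSol_spec T hT hfull u Y).2 (hfullN Y hY)
  intro X'
  rw [← theSol_eq T hT hwsol]
  exact (hw1 X'.1 X'.2).symm

theorem projModel_uniqueSolutions {T : CausalModel S} (hT : T.UniqueSolutions) :
    (projModel φ T hT).UniqueSolutions := by
  intro g' u'
  have hu : (u' PUnit.unit).1 ∈ φ.contexts := (u' PUnit.unit).2
  have hu' : u' = fun _ => (⟨(u' PUnit.unit).1, hu⟩ : {c // c ∈ φ.contexts}) := by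
    funext p; cases p; rfl
  rw [hu']
  refine ⟨fun X' => theSol T hT (gext φ g') (u' PUnit.unit).1 X'.1,
    projModel_sol_of_sol φ hT g' hu (theSol_spec T hT _ _), ?_⟩
  intro v2 h2
  funext X'
  exact sol_of_projModel_sol φ hT g' hu h2 X'

theorem projModel_corr {T : CausalModel S} (hT : T.UniqueSolutions)
    (g : S.Intervention) (hsupp : ∀ Y, Y ∉ φ.vars → g Y = none)
    {u : S.Context} (hu : u ∈ φ.contexts) {v : S.Assignment}
    {v' : (reducedSig S φ).Assignment}
    (hv : T.IsSolution g u v)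
    (hv' : (projModel φ T hT).IsSolution (fun X' => g X'.1) (fun _ => ⟨u, hu⟩) v') :
    ∀ X', v X'.1 = v' X' := by
  intro X'
  have h1 := sol_of_projModel_sol φ hT (fun X' => g X'.1) hu hv' X'
  rw [gext_restrict φ g hsupp] at h1
  rw [h1, ← theSol_eq T hT hv]


theorem projModel_recursive {T : CausalModel S} (hT : T.UniqueSolutions)
    (hrec : T.Recursive) : (projModel φ T hT).Recursive := by
  obtain ⟨r, hr, hind⟩ := hrec
  haveI := hr
  refine ⟨fun X' Y' => r X'.1 Y'.1,
    { trichotomous := ?_, irrefl := ?_, trans := ?_ }, ?_⟩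
  · intro a b hab hba
    rcases trichotomous_of r a.1 b.1 with h | h | h
    · exact absurd h hab
    · exact Subtype.ext h
    · exact absurd h hba
  · intro a
    exact irrefl_of r a.1
  · intro a b c hab hbc
    exact trans_of r hab hbc
  · intro X' u' w1 w2 hagree
    show theSol T hT (fun Y => if hY : Y ∈ φ.vars then if hne : Y = X'.1 then none
        else some (w1 ⟨Y, hY⟩ (fun e => hne (congrArg Subtype.val e))) else none)
        (u' PUnit.unit).1 X'.1
      = theSol T hT (fun Y => if hY : Y ∈ φ.vars then if hne : Y = X'.1 then none
        else some (w2 ⟨Y, hY⟩ (fun e => hne (congrArg Subtype.val e))) else none)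
        (u' PUnit.unit).1 X'.1
    refine sol_agree hr hind (theSol_spec T hT _ _) (theSol_spec T hT _ _) X'.1
      ?_ X'.1 (irrefl_of r X'.1)
    intro Z hZ
    by_cases hvZ : Z ∈ φ.vars
    · by_cases hne : Z = X'.1
      · rw [dif_pos hvZ, dif_pos hvZ, dif_pos hne, dif_pos hne]
      · rw [dif_pos hvZ, dif_pos hvZ, dif_neg hne, dif_neg hne]
        exact congrArg some
          (hagree ⟨Z, hvZ⟩ (fun e => hne (congrArg Subtype.val e)) hZ)
    · rw [dif_neg hvZ, dif_neg hvZ]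


theorem extModel_F_pos {T' : CausalModel (reducedSig S φ)} {X : S.V}
    (hX : X ∈ φ.vars) {u : S.Context} (hu : u ∈ φ.contexts)
    (w : ∀ Y : S.V, Y ≠ X → S.valV Y) :
    (extModel φ T').F X u w =
      T'.F ⟨X, hX⟩ (fun _ => ⟨u, hu⟩)
        (fun Y' hY' => w Y'.1 (fun e => hY' (Subtype.ext e))) :=
  (dif_pos hX).trans (dif_pos hu)

theorem extModel_F_notVar {T' : CausalModel (reducedSig S φ)} {X : S.V}
    (hX : X ∉ φ.vars) (u : S.Context) (w : ∀ Y : S.V, Y ≠ X → S.valV Y) :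
    (extModel φ T').F X u w = Classical.arbitrary (S.valV X) :=
  dif_neg hX

theorem extModel_F_notCtx {T' : CausalModel (reducedSig S φ)} {X : S.V}
    {u : S.Context} (hu : u ∉ φ.contexts) (w : ∀ Y : S.V, Y ≠ X → S.valV Y) :
    (extModel φ T').F X u w = Classical.arbitrary (S.valV X) := by
  by_cases hX : X ∈ φ.vars
  · exact (dif_pos hX).trans (dif_neg hu)
  · exact dif_neg hX

theorem extModel_sol {T' : CausalModel (reducedSig S φ)} {g : S.Intervention}
    {u : S.Context} (hu : u ∈ φ.contexts) {v : S.Assignment}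
    (hv : (extModel φ T').IsSolution g u v) :
    T'.IsSolution (fun X' => g X'.1) (fun _ => ⟨u, hu⟩) (fun X' => v X'.1) := by
  intro X'
  constructor
  · intro x hx
    exact (hv X'.1).1 x hx
  · intro hx
    have h2 := (hv X'.1).2 hx
    show v X'.1 = _
    rw [h2, extModel_F_pos φ X'.2 hu]
    rfl

theorem extModel_uniqueSolutions {T' : CausalModel (reducedSig S φ)}
    (hT' : T'.UniqueSolutions) : (extModel φ T').UniqueSolutions := by
  intro g u
  by_cases hu : u ∈ φ.contexts
  · set v' := theSol T' hT' (fun X' => g X'.1) (fun _ => ⟨u, hu⟩) with hv'def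
    refine ⟨fun Y => if hY : Y ∈ φ.vars then v' ⟨Y, hY⟩
      else (g Y).getD (Classical.arbitrary _), ?_, ?_⟩
    · intro Y
      constructor
      · intro y hy
        by_cases hY : Y ∈ φ.vars
        · refine (dif_pos hY).trans ?_
          exact (theSol_spec T' hT' _ _ ⟨Y, hY⟩).1 y hy
        · refine (dif_neg hY).trans ?_
          rw [hy]
          exact Option.getD_some
      · intro hy
        by_cases hY : Y ∈ φ.vars
        · refine (dif_pos hY).trans ?_
          rw [extModel_F_pos φ hY hu]
          have h2 := (theSol_spec T' hT' (fun X' => g X'.1)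
            (fun _ => ⟨u, hu⟩) ⟨Y, hY⟩).2 hy
          rw [← hv'def] at h2
          rw [h2]
          refine congrArg _ ?_
          funext Y' hY'
          show v' Y' = if hY : Y'.1 ∈ φ.vars then v' ⟨Y'.1, hY⟩
            else (g Y'.1).getD (Classical.arbitrary (S.valV Y'.1))
          refine Eq.trans ?_ (dif_pos Y'.2).symm
          rfl
        · refine (dif_neg hY).trans ?_
          rw [hy, Option.getD_none, (extModel_F_notVar φ hY u _ : _)]
    · intro v2 h2
      funext Y
      by_cases hY : Y ∈ φ.vars
      · refine Eq.trans ?_ (dif_pos hY).symm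
        have hres := extModel_sol φ hu h2
        exact congrFun (theSol_eq T' hT' hres) ⟨Y, hY⟩
      · refine Eq.trans ?_ (dif_neg hY).symm
        cases hgY : g Y with
        | some y =>
          rw [Option.getD_some]
          exact (h2 Y).1 y hgY
        | none =>
          rw [Option.getD_none, (h2 Y).2 hgY, extModel_F_notVar φ hY]
  · refine ⟨fun Y => (g Y).getD (Classical.arbitrary _), ?_, ?_⟩
    · intro Y
      constructor
      · intro y hy
        show (g Y).getD (Classical.arbitrary (S.valV Y)) = y
        rw [hy]
        exact Option.getD_some
      · intro hy
        show (g Y).getD (Classical.arbitrary (S.valV Y)) =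
          (extModel φ T').F Y u fun Z _ => (g Z).getD (Classical.arbitrary (S.valV Z))
        rw [hy, Option.getD_none, extModel_F_notCtx φ hu]
    · intro v2 h2
      funext Y
      show v2 Y = (g Y).getD (Classical.arbitrary (S.valV Y))
      cases hgY : g Y with
      | some y =>
        rw [Option.getD_some]
        exact (h2 Y).1 y hgY
      | none =>
        rw [Option.getD_none, (h2 Y).2 hgY, extModel_F_notCtx φ hu]

theorem extModel_corr {T' : CausalModel (reducedSig S φ)} (hT' : T'.UniqueSolutions)
    (g : S.Intervention) {u : S.Context} (hu : u ∈ φ.contexts)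
    {v : S.Assignment} {v' : (reducedSig S φ).Assignment}
    (hv : (extModel φ T').IsSolution g u v)
    (hv' : T'.IsSolution (fun X' => g X'.1) (fun _ => ⟨u, hu⟩) v') :
    ∀ X', v X'.1 = v' X' := by
  intro X'
  have h1 := theSol_eq T' hT' (extModel_sol φ hu hv)
  have h2 := theSol_eq T' hT' hv'
  exact congrFun (h1.trans h2.symm) X'

/-- Extension of a strict total order on the reduced variables to all variables. -/
def extRel (r' : (reducedSig S φ).V → (reducedSig S φ).V → Prop) :
    S.V → S.V → Prop := fun X Y =>
  if hX : X ∈ φ.vars then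
    (if hY : Y ∈ φ.vars then r' ⟨X, hX⟩ ⟨Y, hY⟩ else True)
  else (if hY : Y ∈ φ.vars then False
    else (Fintype.equivFin S.V) X < (Fintype.equivFin S.V) Y)

theorem extRel_II (r') {X Y : S.V} (hX : X ∈ φ.vars) (hY : Y ∈ φ.vars) :
    extRel φ r' X Y = r' ⟨X, hX⟩ ⟨Y, hY⟩ := by
  show dite _ _ _ = _
  rw [dif_pos hX, dif_pos hY]

theorem extRel_IO (r') {X Y : S.V} (hX : X ∈ φ.vars) (hY : Y ∉ φ.vars) :
    extRel φ r' X Y = True := by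
  show dite _ _ _ = _
  rw [dif_pos hX, dif_neg hY]

theorem extRel_OI (r') {X Y : S.V} (hX : X ∉ φ.vars) (hY : Y ∈ φ.vars) :
    extRel φ r' X Y = False := by
  show dite _ _ _ = _
  rw [dif_neg hX, dif_pos hY]

theorem extRel_OO (r') {X Y : S.V} (hX : X ∉ φ.vars) (hY : Y ∉ φ.vars) :
    extRel φ r' X Y = ((Fintype.equivFin S.V) X < (Fintype.equivFin S.V) Y) := by
  show dite _ _ _ = _
  rw [dif_neg hX, dif_neg hY]

theorem extModel_recursive {T' : CausalModel (reducedSig S φ)}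
    (hrec : T'.Recursive) : (extModel φ T').Recursive := by
  obtain ⟨r', hr', hind'⟩ := hrec
  haveI := hr'
  refine ⟨extRel φ r', { trichotomous := ?_, irrefl := ?_, trans := ?_ }, ?_⟩
  · intro a b hab hba
    by_cases ha : a ∈ φ.vars <;> by_cases hb : b ∈ φ.vars
    · rcases trichotomous_of r' ⟨a, ha⟩ ⟨b, hb⟩ with h | h | h
      · exact (hab ((extRel_II φ r' ha hb).symm ▸ h)).elim
      · exact congrArg Subtype.val h
      · exact (hba ((extRel_II φ r' hb ha).symm ▸ h)).elim
    · exact (hab ((extRel_IO φ r' ha hb).symm ▸ trivial)).elim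
    · exact (hba ((extRel_IO φ r' hb ha).symm ▸ trivial)).elim
    · rcases lt_trichotomy ((Fintype.equivFin S.V) a) ((Fintype.equivFin S.V) b)
        with h | h | h
      · exact (hab ((extRel_OO φ r' ha hb).symm ▸ h)).elim
      · exact (Fintype.equivFin S.V).injective h
      · exact (hba ((extRel_OO φ r' hb ha).symm ▸ h)).elim
  · intro a h
    by_cases ha : a ∈ φ.vars
    · rw [extRel_II φ r' ha ha] at h
      exact irrefl_of r' _ h
    · rw [extRel_OO φ r' ha ha] at h
      exact lt_irrefl _ h
  · intro a b c hab hbc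
    by_cases ha : a ∈ φ.vars <;> by_cases hb : b ∈ φ.vars <;> by_cases hc : c ∈ φ.vars
    · rw [extRel_II φ r' ha hb] at hab
      rw [extRel_II φ r' hb hc] at hbc
      rw [extRel_II φ r' ha hc]
      exact trans_of r' hab hbc
    · rw [extRel_IO φ r' ha hc]; trivial
    · rw [extRel_OI φ r' hb hc] at hbc; exact hbc.elim
    · rw [extRel_IO φ r' ha hc]; trivial
    · rw [extRel_OI φ r' ha hb] at hab; exact hab.elim
    · rw [extRel_OI φ r' ha hb] at hab; exact hab.elim
    · rw [extRel_OI φ r' hb hc] at hbc; exact hbc.elim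
    · rw [extRel_OO φ r' ha hb] at hab
      rw [extRel_OO φ r' hb hc] at hbc
      rw [extRel_OO φ r' ha hc]
      exact lt_trans hab hbc
  · intro X u w1 w2 hagree
    by_cases hX : X ∈ φ.vars
    · by_cases hu : u ∈ φ.contexts
      · rw [extModel_F_pos φ hX hu, extModel_F_pos φ hX hu]
        refine hind' ⟨X, hX⟩ (fun _ => ⟨u, hu⟩) _ _ fun Y' hY' hr'XY => ?_
        refine hagree Y'.1 (fun e => hY' (Subtype.ext e)) ?_
        intro hc
        rw [extRel_II φ r' hX Y'.2] at hc
        exact hr'XY hc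
      · rw [extModel_F_notCtx φ hu, extModel_F_notCtx φ hu]
    · rw [extModel_F_notVar φ hX, extModel_F_notVar φ hX]


theorem iform_eval_congr (χ : IForm S) {σ1 σ2 : S.Context → S.Assignment}
    (h : ∀ u ∈ χ.mentions, σ1 u = σ2 u) : χ.eval σ1 ↔ χ.eval σ2 := by
  induction χ with
  | atom X u x =>
    simp only [IForm.eval]
    rw [h u rfl]
  | not χ ih =>
    simp only [IForm.eval]
    rw [ih h]
  | and χ ψ ih1 ih2 =>
    simp only [IForm.eval]
    rw [ih1 (fun u hu => h u (Set.mem_union_left _ hu)),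
      ih2 (fun u hu => h u (Set.mem_union_right _ hu))]
  | or χ ψ ih1 ih2 =>
    simp only [IForm.eval]
    rw [ih1 (fun u hu => h u (Set.mem_union_left _ hu)),
      ih2 (fun u hu => h u (Set.mem_union_right _ hu))]

theorem iform_restrict_mentions :
    ∀ (χ : IForm S) (hv : ∀ X ∈ χ.vars, X ∈ φ.vars)
      (hc : ∀ u ∈ χ.mentions, u ∈ φ.contexts)
      (u' : (reducedSig S φ).Context), u' ∈ (χ.restrict φ hv hc).mentions →
      ∃ u, ∃ hu : u ∈ χ.mentions,
        u' = fun _ => (⟨u, hc u hu⟩ : {c : S.Context // c ∈ φ.contexts})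
  | .atom X u x, hv, hc, u', hu' => ⟨u, rfl, hu'⟩
  | .not χ, hv, hc, u', hu' => iform_restrict_mentions χ hv hc u' hu'
  | .and χ ψ, hv, hc, u', hu' => by
    rcases hu' with h | h
    · obtain ⟨u, hu, he⟩ := iform_restrict_mentions χ _ _ u' h
      exact ⟨u, Set.mem_union_left _ hu, he⟩
    · obtain ⟨u, hu, he⟩ := iform_restrict_mentions ψ _ _ u' h
      exact ⟨u, Set.mem_union_right _ hu, he⟩
  | .or χ ψ, hv, hc, u', hu' => by
    rcases hu' with h | h
    · obtain ⟨u, hu, he⟩ := iform_restrict_mentions χ _ _ u' h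
      exact ⟨u, Set.mem_union_left _ hu, he⟩
    · obtain ⟨u, hu, he⟩ := iform_restrict_mentions ψ _ _ u' h
      exact ⟨u, Set.mem_union_right _ hu, he⟩

theorem iform_restrict_eval :
    ∀ (χ : IForm S) (hv : ∀ X ∈ χ.vars, X ∈ φ.vars)
      (hc : ∀ u ∈ χ.mentions, u ∈ φ.contexts)
      (σ : S.Context → S.Assignment)
      (σ' : (reducedSig S φ).Context → (reducedSig S φ).Assignment),
      (∀ (u : S.Context) (hu : u ∈ φ.contexts) (X' : (reducedSig S φ).V),
        σ' (fun _ => ⟨u, hu⟩) X' = σ u X'.1) →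
      ((χ.restrict φ hv hc).eval σ' ↔ χ.eval σ)
  | .atom X u x, hv, hc, σ, σ', h => by
    simp only [IForm.restrict, IForm.eval]
    rw [h u (hc u rfl) ⟨X, hv X rfl⟩]
    exact Iff.rfl
  | .not χ, hv, hc, σ, σ', h => by
    simp only [IForm.restrict, IForm.eval]
    exact not_congr (iform_restrict_eval χ _ _ σ σ' h)
  | .and χ ψ, hv, hc, σ, σ', h => by
    simp only [IForm.restrict, IForm.eval]
    rw [iform_restrict_eval χ _ _ σ σ' h, iform_restrict_eval ψ _ _ σ σ' h]
  | .or χ ψ, hv, hc, σ, σ', h => by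
    simp only [IForm.restrict, IForm.eval]
    rw [iform_restrict_eval χ _ _ σ σ' h, iform_restrict_eval ψ _ _ σ σ' h]

theorem boxSat_transfer {T : CausalModel S} {T' : CausalModel (reducedSig S φ)}
    (hT : T.UniqueSolutions) (hT' : T'.UniqueSolutions)
    (g : S.Intervention) (χ : IForm S)
    (hv : ∀ X ∈ χ.vars, X ∈ φ.vars) (hc : ∀ u ∈ χ.mentions, u ∈ φ.contexts)
    (corr : ∀ (u : S.Context) (hu : u ∈ φ.contexts) (v : S.Assignment)
      (v' : (reducedSig S φ).Assignment), T.IsSolution g u v →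
      T'.IsSolution (fun X' => g X'.1) (fun _ => ⟨u, hu⟩) v' → ∀ X', v X'.1 = v' X') :
    T.boxSat g χ ↔ T'.boxSat (fun X' => g X'.1) (χ.restrict φ hv hc) := by
  constructor
  · intro hbox σ' hσ'
    have heval : χ.eval (fun u => theSol T hT g u) :=
      hbox _ (fun u _ => theSol_spec T hT g u)
    have h2 : (χ.restrict φ hv hc).eval
        (fun (u' : (reducedSig S φ).Context) (X' : (reducedSig S φ).V) =>
          theSol T hT g (u' PUnit.unit).1 X'.1) :=
      (iform_restrict_eval φ χ hv hc _ _ (fun u hu X' => rfl)).mpr heval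
    refine (iform_eval_congr _ ?_).mpr h2
    intro u' hu'
    obtain ⟨u, hum, he⟩ := iform_restrict_mentions φ χ hv hc u' hu'
    subst he
    funext X'
    exact (corr u (hc u hum) _ _ (theSol_spec T hT g u) (hσ' _ hu') X').symm
  · intro hbox' σ hσ
    have heval' : (χ.restrict φ hv hc).eval
        (fun u' => theSol T' hT' (fun X' => g X'.1) u') :=
      hbox' _ (fun u' _ => theSol_spec T' hT' _ u')
    have h2 : χ.eval (fun u => theSol T hT g u) :=
      (iform_restrict_eval φ χ hv hc _ _ (fun u hu X' =>
        (corr u hu _ _ (theSol_spec T hT g u) (theSol_spec T' hT' _ _) X').symm)).mp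
        heval'
    exact (iform_eval_congr χ (fun u hu => theSol_eq T hT (hσ u hu))).mpr h2

theorem restrict_sat {T : CausalModel S} {T' : CausalModel (reducedSig S φ)}
    (hT : T.UniqueSolutions) (hT' : T'.UniqueSolutions)
    (corr : ∀ (g : S.Intervention), (∀ Y, Y ∉ φ.vars → g Y = none) →
      ∀ (u : S.Context) (hu : u ∈ φ.contexts) (v : S.Assignment)
        (v' : (reducedSig S φ).Assignment), T.IsSolution g u v →
        T'.IsSolution (fun X' => g X'.1) (fun _ => ⟨u, hu⟩) v' → ∀ X', v X'.1 = v' X') :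
    ∀ (ψ : LPlus S) (hv : ∀ X ∈ ψ.vars, X ∈ φ.vars)
      (hc : ∀ u ∈ ψ.contexts, u ∈ φ.contexts),
      ψ.sat T ↔ (LPlus.restrict φ ψ hv hc).sat T'
  | .box g χ, hv, hc => by
    simp only [LPlus.restrict, LPlus.sat]
    exact boxSat_transfer φ hT hT' g χ
      (fun X hX => hv X (Set.mem_union_right _ hX)) hc
      (corr g (fun Y hY => by
        by_contra h
        exact hY (hv Y (Set.mem_union_left _ h))))
  | .not ψ, hv, hc =>
    not_congr (restrict_sat hT hT' corr ψ hv hc)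
  | .and ψ χ, hv, hc =>
    and_congr
      (restrict_sat hT hT' corr ψ (fun X hX => hv X (Set.mem_union_left _ hX))
        (fun u hu => hc u (Set.mem_union_left _ hu)))
      (restrict_sat hT hT' corr χ (fun X hX => hv X (Set.mem_union_right _ hX))
        (fun u hu => hc u (Set.mem_union_right _ hu)))
  | .or ψ χ, hv, hc =>
    or_congr
      (restrict_sat hT hT' corr ψ (fun X hX => hv X (Set.mem_union_left _ hX))
        (fun u hu => hc u (Set.mem_union_left _ hu)))
      (restrict_sat hT hT' corr χ (fun X hX => hv X (Set.mem_union_right _ hX))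
        (fun u hu => hc u (Set.mem_union_right _ hu)))

end Aux






/-- reduction to the relevant variables for recursive and unique-solution
models: `φ ∈ L⁺(S)` is satisfiable in `T_rec(S)` iff it is satisfiable in
`T_rec(S_φ)`, and satisfiable in `T_uniq(S)` iff satisfiable in `T_uniq(S_φ)`. -/
theorem satisfiable_iff_satisfiable_reduced (S : Signature) (hS : S.Standard)
    (φ : LPlus S) :
    ((∃ T : CausalModel S, T.Recursive ∧ φ.sat T) ↔
      (∃ T' : CausalModel (reducedSig S φ), T'.Recursive ∧ φ.reduced.sat T')) ∧
    ((∃ T : CausalModel S, T.UniqueSolutions ∧ φ.sat T) ↔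
      (∃ T' : CausalModel (reducedSig S φ), T'.UniqueSolutions ∧ φ.reduced.sat T')) := by
  constructor
  · constructor
    · rintro ⟨T, hrec, hsat⟩
      have hT := hrec.uniqueSolutions
      refine ⟨projModel φ T hT, projModel_recursive φ hT hrec, ?_⟩
      exact (restrict_sat φ hT (projModel_uniqueSolutions φ hT)
        (fun g hsupp u hu v v' hv hv' => projModel_corr φ hT g hsupp hu hv hv') φ
        (fun _ h => h) (fun _ h => h)).mp hsat
    · rintro ⟨T', hrec', hsat'⟩
      have hT' := hrec'.uniqueSolutions
      refine ⟨extModel φ T', extModel_recursive φ hrec', ?_⟩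
      exact (restrict_sat φ (extModel_uniqueSolutions φ hT') hT'
        (fun g hsupp u hu v v' hv hv' => extModel_corr φ hT' g hu hv hv') φ
        (fun _ h => h) (fun _ h => h)).mpr hsat'
  · constructor
    · rintro ⟨T, hT, hsat⟩
      refine ⟨projModel φ T hT, projModel_uniqueSolutions φ hT, ?_⟩
      exact (restrict_sat φ hT (projModel_uniqueSolutions φ hT)
        (fun g hsupp u hu v v' hv hv' => projModel_corr φ hT g hsupp hu hv hv') φ
        (fun _ h => h) (fun _ h => h)).mp hsat
    · rintro ⟨T', hT', hsat'⟩
      refine ⟨extModel φ T', extModel_uniqueSolutions φ hT', ?_⟩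
      exact (restrict_sat φ (extModel_uniqueSolutions φ hT') hT'
        (fun g hsupp u hu v v' hv hv' => extModel_corr φ hT' g hu hv hv') φ
        (fun _ h => h) (fun _ h => h)).mpr hsat'
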